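/- Let Ω be a locally compact separable metric space and m : BC(Ω) → ℂ a mean, i.e. a linear functional with m(f) ≥ 0 for f ≥ 0 and m(1) = 1. Let m₀ be the unique positive Borel measure on Ω representing m on C_c(Ω) (Riesz representation). Define m(∞) = 1 − sup{m(f) : f ∈ C_c(Ω), 0 ≤ f ≤ 1}. If m(∞) = 0, then m(f) = ∫_Ω f dm₀ for every f ∈ BC(Ω). -/

import Mathlib

open MeasureTheory
open scoped BoundedContinuousFunction

noncomputable section

/-- `m` is a mean: a positive linear functional on `BC(Ω)` with `m(1) = 1`. -/
def IsMean {Ω : Type*} [TopologicalSpace Ω] (m : (Ω →ᵇ ℂ) →ₗ[ℂ] ℂ) : Prop :=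
  (∀ f : Ω →ᵇ ℂ, (∀ x, (f x).im = 0 ∧ 0 ≤ (f x).re) → (m f).im = 0 ∧ 0 ≤ (m f).re) ∧
  m 1 = 1

/-- `m(∞) = 0`, i.e. `sup {m(f) : f ∈ C_c(Ω), 0 ≤ f ≤ 1} = 1`. -/
def MeanInftyZero {Ω : Type*} [TopologicalSpace Ω] (m : (Ω →ᵇ ℂ) →ₗ[ℂ] ℂ) : Prop :=
  sSup {r : ℝ | ∃ f : Ω →ᵇ ℂ, HasCompactSupport ⇑f ∧
    (∀ x, (f x).im = 0 ∧ 0 ≤ (f x).re ∧ (f x).re ≤ 1) ∧ r = (m f).re} = 1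

section Aux

variable {Ω : Type*} [TopologicalSpace Ω]

lemma lipre : LipschitzWith 1 (fun z : ℂ => (z.re : ℂ)) := by
  refine LipschitzWith.of_dist_le_mul fun z w => ?_
  simp only [NNReal.coe_one, one_mul, Complex.dist_eq]
  have : ((z.re : ℂ)) - ((w.re : ℂ)) = ((z.re - w.re : ℝ) : ℂ) := by push_cast; ring
  rw [this, Complex.norm_real]
  exact (Complex.abs_re_le_norm (z - w)).trans_eq' (by simp [Complex.sub_re])

/-- The real part of a bounded continuous complex function, as a complex BCF. -/
def reC (f : Ω →ᵇ ℂ) : Ω →ᵇ ℂ :=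
  BoundedContinuousFunction.comp _ lipre f

@[simp] lemma reC_apply (f : Ω →ᵇ ℂ) (x : Ω) : reC f x = ((f x).re : ℂ) := rfl

lemma reC_decomp (f : Ω →ᵇ ℂ) :
    f = reC f + Complex.I • reC ((-Complex.I) • f) := by
  ext x
  simp only [BoundedContinuousFunction.coe_add, Pi.add_apply, reC_apply,
    BoundedContinuousFunction.coe_smul, Pi.smul_apply, smul_eq_mul]
  have : ((-Complex.I) * f x).re = (f x).im := by
    simp [Complex.mul_re]
  rw [this]
  simp [Complex.ext_iff]

lemma mean_real {m : (Ω →ᵇ ℂ) →ₗ[ℂ] ℂ} (hm : IsMean m)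
    (f : Ω →ᵇ ℂ) (hf : ∀ x, (f x).im = 0) : (m f).im = 0 := by
  have h := hm.1 (f + (‖f‖ : ℂ) • 1) ?_
  · have e : m (f + (‖f‖ : ℂ) • 1) = m f + (‖f‖ : ℂ) := by
      rw [map_add, _root_.map_smul, hm.2, smul_eq_mul, mul_one]
    rw [e] at h
    have := h.1
    simpa using this
  · intro x
    simp only [BoundedContinuousFunction.coe_add, Pi.add_apply,
      BoundedContinuousFunction.coe_smul, Pi.smul_apply,
      BoundedContinuousFunction.coe_one, Pi.one_apply, smul_eq_mul, mul_one]
    constructor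
    · simp [hf x]
    · have h1 : |(f x).re| ≤ ‖f x‖ := Complex.abs_re_le_norm _
      have h2 : ‖f x‖ ≤ ‖f‖ := f.norm_coe_le_norm x
      have : -(‖f‖) ≤ (f x).re := by
        have := abs_le.mp (h1.trans h2)
        linarith [this.1]
      simp only [Complex.add_re, Complex.ofReal_re]
      linarith

lemma mean_mono {m : (Ω →ᵇ ℂ) →ₗ[ℂ] ℂ} (hm : IsMean m)
    (f g : Ω →ᵇ ℂ) (h : ∀ x, (f x).im = 0 ∧ (g x).im = 0 ∧ (f x).re ≤ (g x).re) :
    (m f).re ≤ (m g).re := by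
  have hp := hm.1 (g - f) ?_
  · have e : m (g - f) = m g - m f := by rw [map_sub]
    rw [e] at hp
    have := hp.2
    simp only [Complex.sub_re] at this
    linarith
  · intro x
    simp only [BoundedContinuousFunction.coe_sub, Pi.sub_apply, Complex.sub_im,
      Complex.sub_re]
    exact ⟨by rw [(h x).1, (h x).2.1]; ring, by linarith [(h x).2.2]⟩

lemma mean_norm_le {m : (Ω →ᵇ ℂ) →ₗ[ℂ] ℂ} (hm : IsMean m)
    (h φ : Ω →ᵇ ℂ) (hφ : ∀ x, (φ x).im = 0)
    (hle : ∀ x, ‖h x‖ ≤ (φ x).re) : ‖m h‖ ≤ (m φ).re := by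
  have hφ0 : 0 ≤ (m φ).re := by
    have := mean_mono hm 0 φ (fun x => by
      simpa [hφ x] using (norm_nonneg (h x)).trans (hle x))
    simpa using this
  rcases eq_or_ne (m h) 0 with h0 | h0
  · simpa [h0] using hφ0
  set c : ℂ := (starRingEnd ℂ) (m h) / ‖m h‖ with hc
  have hcabs : ‖c‖ = 1 := by
    rw [hc, norm_div, Complex.norm_conj, Complex.norm_real, norm_norm,
      div_self (norm_ne_zero_iff.mpr h0)]
  have hne : (‖m h‖ : ℂ) ≠ 0 := by
    simpa [Complex.ofReal_eq_zero, norm_eq_zero] using h0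
  have key : m (c • h) = (‖m h‖ : ℂ) := by
    rw [_root_.map_smul, smul_eq_mul, hc, div_mul_eq_mul_div, Complex.conj_mul']
    rw [pow_two, mul_div_assoc, div_self hne, mul_one]
  have hre : ‖m h‖ = (m (c • h)).re := by rw [key]; simp
  have hdec : m (c • h) = m (reC (c • h)) + Complex.I * m (reC ((-Complex.I) • (c • h))) := by
    conv_lhs => rw [reC_decomp (c • h)]
    rw [map_add, _root_.map_smul, smul_eq_mul]
  have him : (m (reC ((-Complex.I) • (c • h)))).im = 0 :=
    mean_real hm _ (fun x => by simp)
  have hre2 : (m (c • h)).re = (m (reC (c • h))).re := by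
    rw [hdec, Complex.add_re, Complex.mul_re, Complex.I_re, Complex.I_im, him]
    ring
  have hmono := mean_mono hm (reC (c • h)) φ (fun x => by
    refine ⟨by simp, hφ x, ?_⟩
    simp only [reC_apply, Complex.ofReal_re, BoundedContinuousFunction.coe_smul,
      Pi.smul_apply, smul_eq_mul]
    calc (c * h x).re ≤ ‖c * h x‖ := Complex.re_le_norm _
      _ = ‖c‖ * ‖h x‖ := norm_mul _ _
      _ = ‖h x‖ := by rw [hcabs, one_mul]
      _ ≤ (φ x).re := hle x)
  rw [hre, hre2]
  exact hmono

end Aux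

/-- if `m(∞) = 0` then the representing (Riesz) measure `m₀` represents `m`
on all of `BC(Ω)`. -/
theorem stmt11 {Ω : Type*} [MetricSpace Ω] [LocallyCompactSpace Ω]
    [TopologicalSpace.SeparableSpace Ω] [MeasurableSpace Ω] [BorelSpace Ω]
    (m : (Ω →ᵇ ℂ) →ₗ[ℂ] ℂ) (hm : IsMean m)
    (m₀ : Measure Ω) [m₀.Regular]
    (hrep : ∀ f : Ω →ᵇ ℂ, HasCompactSupport ⇑f → m f = ∫ x, f x ∂m₀)
    (hinf : MeanInftyZero m) :
    ∀ f : Ω →ᵇ ℂ, m f = ∫ x, f x ∂m₀ := by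
  -- Step 1: the measure is finite with total mass at most 1.
  have hfin : m₀ Set.univ ≤ 1 := by
    by_contra hcon
    push_neg at hcon
    obtain ⟨K, -, hKc, hK1⟩ := Measure.Regular.innerRegular isOpen_univ 1 hcon
    obtain ⟨g, hg1, -, hgsupp, hg01⟩ :=
      exists_continuous_one_zero_of_isCompact hKc isClosed_empty (Set.disjoint_empty K)
    set gC : Ω →ᵇ ℂ := BoundedContinuousFunction.ofNormedAddCommGroup
      (fun x => ((g x : ℝ) : ℂ)) (Complex.continuous_ofReal.comp g.continuous) 1
      (fun x => by
        rw [Complex.norm_real, Real.norm_eq_abs]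
        rcases hg01 x with ⟨h0, h1⟩
        rw [abs_of_nonneg h0]; exact h1) with hgCdef
    have hgCapp : ∀ x, gC x = ((g x : ℝ) : ℂ) := fun x => rfl
    have hgCsupp : HasCompactSupport ⇑gC := by
      have : ⇑gC = (fun r : ℝ => (r : ℂ)) ∘ ⇑g := rfl
      rw [this]
      exact hgsupp.comp_left (by simp)
    have hint : Integrable (fun x => g x) m₀ :=
      g.continuous.integrable_of_hasCompactSupport hgsupp
    have hKfin : m₀ K < ⊤ := hKc.measure_lt_top
    have hindint : Integrable (Set.indicator K (fun _ => (1:ℝ))) m₀ := by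
      refine (IntegrableOn.integrable_indicator ?_ hKc.measurableSet)
      exact (integrableOn_const hKfin.ne)
    have h1 : (m₀ K).toReal = ∫ x, Set.indicator K (fun _ => (1:ℝ)) x ∂m₀ := by
      rw [integral_indicator hKc.measurableSet, setIntegral_const, smul_eq_mul, mul_one, measureReal_def]
    have hmono : ∫ x, Set.indicator K (fun _ => (1:ℝ)) x ∂m₀ ≤ ∫ x, g x ∂m₀ := by
      refine integral_mono hindint hint ?_
      intro x
      by_cases hx : x ∈ K
      · have hgx : g x = 1 := hg1 hx
        simp [Set.indicator_of_mem hx, hgx]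
      · simp [Set.indicator_of_notMem hx, (hg01 x).1]
    have hmgC : (m gC).re = ∫ x, g x ∂m₀ := by
      have hip : Integrable ⇑gC m₀ := gC.continuous.integrable_of_hasCompactSupport hgCsupp
      have h := integral_re hip
      simp only [RCLike.re_to_complex] at h
      rw [hrep gC hgCsupp, ← h]
      refine integral_congr_ae (Filter.Eventually.of_forall fun x => ?_)
      show (gC x).re = g x
      rw [hgCapp x, Complex.ofReal_re]
    have hle1 : (m gC).re ≤ 1 := by
      have h := mean_mono hm gC 1 (fun x => by
        rw [hgCapp x]
        refine ⟨by simp, by simp, ?_⟩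
        simp only [Complex.ofReal_re, BoundedContinuousFunction.coe_one, Pi.one_apply,
          Complex.one_re]
        exact (hg01 x).2)
      rwa [hm.2, Complex.one_re] at h
    have hintle : ∫ x, g x ∂m₀ ≤ 1 := by
      rw [← hmgC]; exact hle1
    have hKle : (m₀ K).toReal ≤ 1 := by
      rw [h1]; linarith
    have : m₀ K ≤ 1 := by
      rw [← ENNReal.toReal_one] at hKle
      exact (ENNReal.toReal_le_toReal hKfin.ne ENNReal.one_ne_top).mp hKle
    exact absurd this (not_le.mpr hK1)
  have : IsFiniteMeasure m₀ := ⟨lt_of_le_of_lt hfin ENNReal.one_lt_top⟩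
  intro f
  -- Step 2: the key epsilon estimate.
  have key : ∀ ε > (0:ℝ), ‖m f - ∫ x, f x ∂m₀‖ ≤ 2 * ‖f‖ * ε := by
    intro ε hε
    have hne : Set.Nonempty {r : ℝ | ∃ f : Ω →ᵇ ℂ, HasCompactSupport ⇑f ∧
        (∀ x, (f x).im = 0 ∧ 0 ≤ (f x).re ∧ (f x).re ≤ 1) ∧ r = (m f).re} := by
      refine ⟨0, 0, ?_, fun x => by simp, by simp⟩
      exact HasCompactSupport.intro isCompact_empty (fun x _ => rfl)
    obtain ⟨r, hrS, hrgt⟩ := exists_lt_of_lt_csSup hne (by rw [hinf]; linarith : 1 - ε < _)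
    obtain ⟨g, hgc, hg, hr⟩ := hrS
    have hmg : 1 - ε < (m g).re := hr ▸ hrgt
    have him : ∀ x, (g x).im = 0 := fun x => (hg x).1
    have hg0 : ∀ x, 0 ≤ (g x).re := fun x => (hg x).2.1
    have hg1 : ∀ x, (g x).re ≤ 1 := fun x => (hg x).2.2
    -- the compactly supported product
    have hfg : HasCompactSupport ⇑(f * g) := by
      have : ⇑(f * g) = ⇑f * ⇑g := rfl
      rw [this]
      exact hgc.mul_left
    have hmfg : m (f * g) = ∫ x, (f * g) x ∂m₀ := hrep (f * g) hfg
    -- norm of 1 - g x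
    have hnorm1g : ∀ x, ‖(1 : ℂ) - g x‖ = 1 - (g x).re := by
      intro x
      have : (1 : ℂ) - g x = ((1 - (g x).re : ℝ) : ℂ) := by
        apply Complex.ext <;> simp [him x]
      rw [this, Complex.norm_real, Real.norm_eq_abs,
        abs_of_nonneg (by linarith [hg1 x])]
    -- Term 1: |m f - m (f*g)| ≤ ‖f‖ * ε
    set φ : Ω →ᵇ ℂ := (‖f‖ : ℂ) • (1 - g) with hφdef
    have hφapp : ∀ x, φ x = (‖f‖ : ℂ) * (1 - g x) := fun x => rfl
    have hφim : ∀ x, (φ x).im = 0 := by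
      intro x
      rw [hφapp x]
      simp [Complex.mul_im, him x]
    have hφre : ∀ x, (φ x).re = ‖f‖ * (1 - (g x).re) := by
      intro x
      rw [hφapp x]
      simp [Complex.mul_re, him x]
    have hT1 : ‖m (f - f * g)‖ ≤ ‖f‖ * (1 - (m g).re) := by
      have hb := mean_norm_le hm (f - f * g) φ hφim (fun x => by
        have : (f - f * g) x = f x * (1 - g x) := by
          simp [mul_sub]
        rw [this, hφre x, norm_mul, hnorm1g x]
        exact mul_le_mul (f.norm_coe_le_norm x) le_rfl (by linarith [hg1 x]) (norm_nonneg f))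
      have hφval : (m φ).re = ‖f‖ * (1 - (m g).re) := by
        have : m φ = (‖f‖ : ℂ) * (1 - m g) := by
          rw [hφdef, _root_.map_smul, smul_eq_mul, map_sub, hm.2]
        rw [this]
        simp [Complex.mul_re, Complex.sub_re, Complex.sub_im]
      rwa [hφval] at hb
    -- Term 2: |∫ (f*g) - ∫ f| ≤ ‖f‖ * (1 - (m g).re)
    have hgR : HasCompactSupport (fun x => (g x).re) := by
      have : (fun x => (g x).re) = Complex.re ∘ ⇑g := rfl
      rw [this]
      exact hgc.comp_left (by simp)
    have hgRint : Integrable (fun x => (g x).re) m₀ :=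
      (Complex.continuous_re.comp g.continuous).integrable_of_hasCompactSupport hgR
    have hgRval : ∫ x, (g x).re ∂m₀ = (m g).re := by
      have hip : Integrable ⇑g m₀ := g.continuous.integrable_of_hasCompactSupport hgc
      have h := integral_re hip
      simp only [RCLike.re_to_complex] at h
      rw [h, hrep g hgc]
    have hT2 : ‖∫ x, (f - f * g) x ∂m₀‖ ≤ ‖f‖ * (1 - (m g).re) := by
      calc ‖∫ x, (f - f * g) x ∂m₀‖ ≤ ∫ x, ‖(f - f * g) x‖ ∂m₀ :=
            norm_integral_le_integral_norm _
        _ ≤ ∫ x, ‖f‖ * (1 - (g x).re) ∂m₀ := by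
            refine integral_mono ((f - f * g).integrable m₀).norm ?_ ?_
            · exact ((integrable_const (1:ℝ)).sub hgRint).const_mul ‖f‖
            · intro x
              show ‖(f - f * g) x‖ ≤ ‖f‖ * (1 - (g x).re)
              have : (f - f * g) x = f x * (1 - g x) := by simp [mul_sub]
              rw [this, norm_mul, hnorm1g x]
              exact mul_le_mul (f.norm_coe_le_norm x) le_rfl (by linarith [hg1 x])
                (norm_nonneg f)
        _ = ‖f‖ * ((m₀ Set.univ).toReal - ∫ x, (g x).re ∂m₀) := by
            rw [integral_const_mul, integral_sub (integrable_const (1:ℝ)) hgRint,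
              integral_const, smul_eq_mul, mul_one, measureReal_def]
        _ ≤ ‖f‖ * (1 - (m g).re) := by
            refine mul_le_mul_of_nonneg_left ?_ (norm_nonneg f)
            rw [hgRval]
            have : (m₀ Set.univ).toReal ≤ 1 := by
              rw [← ENNReal.toReal_one]
              exact ENNReal.toReal_mono ENNReal.one_ne_top hfin
            linarith
    -- combine
    have hsplit : m f - ∫ x, f x ∂m₀ =
        m (f - f * g) - ∫ x, (f - f * g) x ∂m₀ := by
      have hi : ∫ x, (f - f * g) x ∂m₀ = (∫ x, f x ∂m₀) - ∫ x, (f * g) x ∂m₀ := by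
        have hcoe : ∀ x, (f - f * g) x = f x - (f * g) x := fun x => rfl
        rw [integral_congr_ae (Filter.Eventually.of_forall hcoe)]
        exact integral_sub (f.integrable m₀) ((f * g).integrable m₀)
      rw [map_sub, hmfg, hi]
      ring
    calc ‖m f - ∫ x, f x ∂m₀‖
        ≤ ‖m (f - f * g)‖ + ‖∫ x, (f - f * g) x ∂m₀‖ := by
          rw [hsplit]; exact norm_sub_le _ _
      _ ≤ ‖f‖ * (1 - (m g).re) + ‖f‖ * (1 - (m g).re) := add_le_add hT1 hT2
      _ ≤ 2 * ‖f‖ * ε := by nlinarith [norm_nonneg f, hmg]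
  -- Step 3: conclude.
  have hzero : ‖m f - ∫ x, f x ∂m₀‖ ≤ 0 := by
    refine le_of_forall_pos_le_add fun ε hε => ?_
    have h2 := key (ε / (2 * ‖f‖ + 1)) (by positivity)
    have h3 : 2 * ‖f‖ * (ε / (2 * ‖f‖ + 1)) ≤ ε := by
      rw [mul_div_assoc']
      rw [div_le_iff₀ (by positivity)]
      nlinarith [norm_nonneg f, hε.le]
    linarith
  exact sub_eq_zero.mp (norm_le_zero_iff.mp hzero)
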